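/- Brauer's theorem: Let A be an n×n complex matrix with characteristic polynomial splitting with eigenvalues λ₁,…,λₙ (counted with multiplicity), let x be an eigenvector of A for λ₁, and let q ∈ ℂⁿ. Then the characteristic polynomial of A + x qᵀ equals that of A with the root λ₁ replaced by λ₁ + qᵀx; i.e., charpoly(A + x qᵀ) = (X − λ₁ − qᵀx) · ∏_{i=2}^{n} (X − λᵢ). -/

import Mathlib

open Matrix Polynomial

lemma eval_charpoly' {m : Type*} [Fintype m] [DecidableEq m]
    (M : Matrix m m ℂ) (t : ℂ) :
    (M.charpoly).eval t = (Matrix.scalar m t - M).det := by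
  rw [Matrix.charpoly, _root_.eval_det, Matrix.matPolyEquiv_charmatrix]
  simp

theorem stmt1 {n : ℕ} (A : Matrix (Fin (n + 1)) (Fin (n + 1)) ℂ)
    (lam : Fin (n + 1) → ℂ)
    (hchar : A.charpoly = ∏ i, (X - C (lam i)))
    (x q : Fin (n + 1) → ℂ) (hx : x ≠ 0)
    (hAx : A.mulVec x = lam 0 • x) :
    (A + vecMulVec x q).charpoly =
      (X - C (lam 0 + q ⬝ᵥ x)) * ∏ i ∈ Finset.univ.erase 0, (X - C (lam i)) := by
  -- key polynomial identity
  have key : (X - C (lam 0)) * (A + vecMulVec x q).charpoly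
      = (X - C (lam 0 + q ⬝ᵥ x)) * A.charpoly := by
    apply Polynomial.eq_of_infinite_eval_eq
    have hsub : {t : ℂ | ∀ i, t ≠ lam i} ⊆
        {t : ℂ | eval t ((X - C (lam 0)) * (A + vecMulVec x q).charpoly)
          = eval t ((X - C (lam 0 + q ⬝ᵥ x)) * A.charpoly)} := by
      intro t ht
      simp only [Set.mem_setOf_eq] at ht ⊢
      set B := Matrix.scalar (Fin (n + 1)) t - A with hB
      have hdetB : B.det ≠ 0 := by
        have h := eval_charpoly' A t
        rw [hchar] at h
        rw [hB, ← h]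
        simp only [eval_prod, eval_sub, eval_X, eval_C]
        exact Finset.prod_ne_zero_iff.mpr fun i _ => sub_ne_zero.mpr (ht i)
      have hμ : t - lam 0 ≠ 0 := sub_ne_zero.mpr (ht 0)
      have hscal : (Matrix.scalar (Fin (n + 1)) t) *ᵥ x = t • x := by
        ext i
        simp [Matrix.scalar, mulVec_diagonal]
      have hBx : B *ᵥ x = (t - lam 0) • x := by
        rw [hB, sub_mulVec, hAx, sub_smul, hscal]
      have hBinvx : B⁻¹ *ᵥ x = (t - lam 0)⁻¹ • x := by
        have h2 : (t - lam 0) • (B⁻¹ *ᵥ x) = x := by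
          rw [← mulVec_smul, ← hBx, mulVec_mulVec,
            Matrix.nonsing_inv_mul B (isUnit_iff_ne_zero.mpr hdetB), one_mulVec]
        calc B⁻¹ *ᵥ x = (t - lam 0)⁻¹ • ((t - lam 0) • (B⁻¹ *ᵥ x)) := by
              rw [smul_smul, inv_mul_cancel₀ hμ, one_smul]
          _ = (t - lam 0)⁻¹ • x := by rw [h2]
      have hdl : (B + replicateCol Unit (-x) * replicateRow Unit q).det
          = B.det * (1 + replicateRow Unit q * B⁻¹ * replicateCol Unit (-x)).det :=
        Matrix.det_add_replicateCol_mul_replicateRow (isUnit_iff_ne_zero.mpr hdetB) _ _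
      have h1 : (1 + replicateRow Unit q * B⁻¹ * replicateCol Unit (-x)).det
          = 1 - (t - lam 0)⁻¹ * (q ⬝ᵥ x) := by
        rw [det_unique]
        have hc : B⁻¹ * replicateCol Unit (-x) = replicateCol Unit (B⁻¹ *ᵥ (-x)) := (replicateCol_mulVec _ _).symm
        rw [Matrix.mul_assoc, hc]
        simp only [Matrix.add_apply, Matrix.one_apply_eq, replicateRow_mul_replicateCol_apply]
        rw [mulVec_neg, hBinvx]
        simp [mul_comm, sub_eq_add_neg]
      have hlhs : eval t ((A + vecMulVec x q).charpoly)
          = (B + replicateCol Unit (-x) * replicateRow Unit q).det := by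
        rw [eval_charpoly']
        congr 1
        rw [vecMulVec_eq Unit]
        ext i j
        simp [hB, Matrix.mul_apply, replicateCol, replicateRow]
        ring
      have hrhs : eval t A.charpoly = B.det := eval_charpoly' A t
      simp only [eval_mul, eval_sub, eval_X, eval_C, hlhs, hrhs, hdl, h1]
      field_simp
      ring
    refine Set.Infinite.mono hsub ?_
    have heq : {t : ℂ | ∀ i, t ≠ lam i} = (⋃ i, {lam i})ᶜ := by
      ext t
      simp [Set.mem_iUnion, eq_comm]
    rw [heq]
    exact Set.Finite.infinite_compl (Set.finite_iUnion fun i => Set.finite_singleton _)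
  -- cancel X - C (lam 0)
  have hX : (X - C (lam 0) : ℂ[X]) ≠ 0 := X_sub_C_ne_zero _
  apply mul_left_cancel₀ hX
  rw [key, hchar, ← Finset.mul_prod_erase Finset.univ _ (Finset.mem_univ 0)]
  ring
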